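/- Multivariate Hoeffding-type bound: if f : 𝒳^n → ℝ has the bounded difference property with constants c_1, …, c_n, and X_1, …, X_n are independent 𝒳-valued random variables, then with Z = f(X_1,…,X_n), for every λ ∈ ℝ, E[exp(λ(E[Z] - Z))] ≤ exp(λ² Σ_{i=1}^n c_i² / 8). -/

import Mathlib

open MeasureTheory ProbabilityTheory

noncomputable def Dfun (p x : ℝ) : ℝ := 1 - p + p * Real.exp x
noncomputable def F1fun (p x : ℝ) : ℝ := p + x / 4 - p * Real.exp x / Dfun p x
noncomputable def Ffun (p x : ℝ) : ℝ := p * x + x ^ 2 / 8 - Real.log (Dfun p x)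

lemma Dfun_pos {p : ℝ} (hp0 : 0 ≤ p) (hp1 : p ≤ 1) (x : ℝ) : 0 < Dfun p x := by
  rcases lt_or_eq_of_le hp1 with hlt | heq
  · have h1 : 0 ≤ p * Real.exp x := mul_nonneg hp0 (Real.exp_pos x).le
    unfold Dfun; linarith
  · subst heq
    unfold Dfun
    have := Real.exp_pos x
    linarith

lemma Dfun_hasDeriv (p x : ℝ) : HasDerivAt (Dfun p) (p * Real.exp x) x := by
  exact ((Real.hasDerivAt_exp x).const_mul p).const_add (1 - p)

lemma Ffun_hasDeriv {p : ℝ} (hp0 : 0 ≤ p) (hp1 : p ≤ 1) (x : ℝ) :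
    HasDerivAt (Ffun p) (F1fun p x) x := by
  have h1 : HasDerivAt (fun x : ℝ => p * x + x ^ 2 / 8) (p + x / 4) x := by
    have ha : HasDerivAt (fun x : ℝ => p * x) p x := by
      simpa using (hasDerivAt_id x).const_mul p
    have hb : HasDerivAt (fun x : ℝ => x ^ 2 / 8) (x / 4) x := by
      have := (hasDerivAt_pow 2 x).div_const 8
      refine this.congr_deriv ?_
      ring
    exact ha.add hb
  have h2 : HasDerivAt (fun x => Real.log (Dfun p x)) (p * Real.exp x / Dfun p x) x :=
    (Dfun_hasDeriv p x).log (Dfun_pos hp0 hp1 x).ne'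
  exact h1.sub h2

lemma F1fun_hasDeriv {p : ℝ} (hp0 : 0 ≤ p) (hp1 : p ≤ 1) (x : ℝ) :
    HasDerivAt (F1fun p) (1 / 4 - p * Real.exp x * (1 - p) / (Dfun p x) ^ 2) x := by
  have ha : HasDerivAt (fun x : ℝ => p + x / 4) (1 / 4) x := by
    simpa using ((hasDerivAt_id x).div_const 4).const_add p
  have hnum : HasDerivAt (fun x : ℝ => p * Real.exp x) (p * Real.exp x) x :=
    (Real.hasDerivAt_exp x).const_mul p
  have hq := hnum.div (Dfun_hasDeriv p x) (Dfun_pos hp0 hp1 x).ne'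
  have h := ha.sub hq
  refine h.congr_deriv ?_
  have hDx : Dfun p x = 1 - p + p * Real.exp x := rfl
  rw [hDx]
  ring

lemma F1fun_nonneg_deriv {p : ℝ} (hp0 : 0 ≤ p) (hp1 : p ≤ 1) (x : ℝ) :
    0 ≤ 1 / 4 - p * Real.exp x * (1 - p) / (Dfun p x) ^ 2 := by
  have hD := Dfun_pos hp0 hp1 x
  have hDx : Dfun p x = 1 - p + p * Real.exp x := rfl
  rw [sub_nonneg, div_le_iff₀ (pow_pos hD 2), hDx]
  nlinarith [sq_nonneg (1 - p - p * Real.exp x), mul_nonneg hp0 (Real.exp_pos x).le]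

lemma F1fun_mono {p : ℝ} (hp0 : 0 ≤ p) (hp1 : p ≤ 1) : Monotone (F1fun p) := by
  have hdiff : Differentiable ℝ (F1fun p) := fun x => (F1fun_hasDeriv hp0 hp1 x).differentiableAt
  refine monotone_of_deriv_nonneg hdiff fun x => ?_
  rw [(F1fun_hasDeriv hp0 hp1 x).deriv]
  exact F1fun_nonneg_deriv hp0 hp1 x

lemma F1fun_zero (p : ℝ) : F1fun p 0 = 0 := by
  unfold F1fun Dfun
  simp [Real.exp_zero]

lemma Ffun_nonneg {p : ℝ} (hp0 : 0 ≤ p) (hp1 : p ≤ 1) (x : ℝ) : 0 ≤ Ffun p x := by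
  have hF0 : Ffun p 0 = 0 := by
    unfold Ffun Dfun
    simp [Real.exp_zero]
  have hdiff : ∀ y, HasDerivAt (Ffun p) (F1fun p y) y := Ffun_hasDeriv hp0 hp1
  rcases le_total 0 x with hx | hx
  · have hmono : MonotoneOn (Ffun p) (Set.Ici 0) := by
      refine monotoneOn_of_deriv_nonneg (convex_Ici 0)
        (Continuous.continuousOn (by
          exact continuous_iff_continuousAt.2 fun y => (hdiff y).continuousAt))
        (fun y _ => (hdiff y).differentiableAt.differentiableWithinAt)
        (fun y hy => ?_)
      rw [(hdiff y).deriv]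
      rw [interior_Ici] at hy
      have : (0:ℝ) ≤ y := le_of_lt hy
      calc (0:ℝ) = F1fun p 0 := (F1fun_zero p).symm
        _ ≤ F1fun p y := F1fun_mono hp0 hp1 this
    have := hmono (Set.self_mem_Ici) (Set.mem_Ici.2 hx) hx
    linarith [hF0 ▸ this]
  · have hanti : AntitoneOn (Ffun p) (Set.Iic 0) := by
      refine antitoneOn_of_deriv_nonpos (convex_Iic 0)
        (Continuous.continuousOn (by
          exact continuous_iff_continuousAt.2 fun y => (hdiff y).continuousAt))
        (fun y _ => (hdiff y).differentiableAt.differentiableWithinAt)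
        (fun y hy => ?_)
      rw [(hdiff y).deriv]
      rw [interior_Iic] at hy
      have hy0 : y ≤ (0:ℝ) := le_of_lt hy
      calc F1fun p y ≤ F1fun p 0 := F1fun_mono hp0 hp1 hy0
        _ = 0 := F1fun_zero p
    have := hanti (Set.mem_Iic.2 hx) (Set.self_mem_Iic) hx
    linarith [hF0 ▸ this]

lemma key_ineq {p : ℝ} (hp0 : 0 ≤ p) (hp1 : p ≤ 1) (h : ℝ) :
    1 - p + p * Real.exp h ≤ Real.exp (p * h + h ^ 2 / 8) := by
  have hD := Dfun_pos hp0 hp1 h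
  have hF := Ffun_nonneg hp0 hp1 h
  unfold Ffun at hF
  have hlog : Real.log (Dfun p h) ≤ p * h + h ^ 2 / 8 := by linarith
  calc 1 - p + p * Real.exp h = Dfun p h := rfl
    _ = Real.exp (Real.log (Dfun p h)) := (Real.exp_log hD).symm
    _ ≤ Real.exp (p * h + h ^ 2 / 8) := Real.exp_le_exp.2 hlog

lemma integrable_of_abs_le {α : Type*} [MeasurableSpace α] (μ : Measure α) [IsFiniteMeasure μ]
    {g : α → ℝ} (hg : Measurable g) {C : ℝ} (h : ∀ x, |g x| ≤ C) : Integrable g μ :=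
  Integrable.mono' (integrable_const C) hg.aestronglyMeasurable
    (Filter.Eventually.of_forall fun x => by simpa using h x)

lemma hoeffding_le {α : Type*} [MeasurableSpace α] (μ : Measure α) [IsProbabilityMeasure μ]
    {Y : α → ℝ} (hY : Measurable Y) {c : ℝ} (hc : ∀ x x', |Y x - Y x'| ≤ c) (t : ℝ) :
    ∫ x, Real.exp (t * ((∫ x', Y x' ∂μ) - Y x)) ∂μ ≤ Real.exp (t ^ 2 * c ^ 2 / 8) := by
  have hne : Nonempty α := by
    by_contra hemp
    rw [not_nonempty_iff] at hemp
    have h1 : μ Set.univ = 1 := measure_univ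
    rw [Set.univ_eq_empty_iff.2 hemp] at h1
    simp at h1
  haveI := hne
  have x₀ : α := Classical.arbitrary α
  have hc0 : 0 ≤ c := le_trans (abs_nonneg _) (hc x₀ x₀)
  have hYbd : ∀ x, |Y x| ≤ |Y x₀| + c := fun x => by
    have := hc x x₀
    have h1 := abs_le.1 this
    rw [abs_le]; constructor <;> [linarith [neg_abs_le (Y x₀)]; linarith [le_abs_self (Y x₀)]]
  have hint : Integrable Y μ := integrable_of_abs_le μ hY hYbd
  set m := ∫ x', Y x' ∂μ with hm
  rcases eq_or_lt_of_le hc0 with hc0' | hcpos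
  · -- c = 0 : Y is constant
    have hYc : ∀ x, Y x = Y x₀ := fun x => by
      have := hc x x₀; rw [← hc0'] at this
      have := abs_le.1 this; linarith [this.1, this.2]
    have hmx : m = Y x₀ := by
      rw [hm]
      have : (fun x' => Y x') = fun _ => Y x₀ := funext hYc
      rw [this, integral_const]; simp
    have : (fun x => Real.exp (t * (m - Y x))) = fun _ => (1:ℝ) := by
      funext x; rw [hYc x, hmx]; simp
    rw [this, integral_const]
    simp [← hc0']
  · -- c > 0
    have hbdd : BddBelow (Set.range Y) := ⟨Y x₀ - c, by
      rintro _ ⟨x, rfl⟩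
      have := (abs_le.1 (hc x₀ x)).2; linarith⟩
    set a := ⨅ x, Y x with ha
    have ha_le : ∀ x, a ≤ Y x := fun x => ciInf_le hbdd x
    have hle_b : ∀ x, Y x ≤ a + c := fun x => by
      have : Y x - c ≤ a := le_ciInf fun x' => by
        have := (abs_le.1 (hc x x')).2; linarith
      linarith
    set b := a + c with hb
    have hma : a ≤ m := by
      have h1 : ∫ _, a ∂μ ≤ ∫ x, Y x ∂μ := integral_mono (integrable_const a) hint ha_le
      rwa [integral_const, probReal_univ, one_smul] at h1
    have hmb : m ≤ b := by
      have h1 : ∫ x, Y x ∂μ ≤ ∫ _, b ∂μ := integral_mono hint (integrable_const b) hle_b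
      rwa [integral_const, probReal_univ, one_smul] at h1
    set p := (m - a) / c with hp
    have hp0 : 0 ≤ p := div_nonneg (by linarith) hc0
    have hp1 : p ≤ 1 := (div_le_one hcpos).2 (by linarith)
    set h := -(t * c) with hh
    set K1 := Real.exp (t * (m - a)) with hK1
    set K2 := Real.exp (t * (m - b)) with hK2
    have hK1pos := Real.exp_pos (t * (m - a))
    have hK2pos := Real.exp_pos (t * (m - b))
    -- pointwise convexity bound
    have hptw : ∀ x, Real.exp (t * (m - Y x)) ≤
        ((b - Y x) / c) * K1 + ((Y x - a) / c) * K2 := by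
      intro x
      set θ := (b - Y x) / c with hθdef
      have hθ0 : 0 ≤ θ := div_nonneg (by linarith [hle_b x]) hc0
      have hθ1 : 1 - θ = (Y x - a) / c := by
        rw [hθdef, hb, eq_div_iff hcpos.ne', sub_mul, div_mul_cancel₀ _ hcpos.ne']
        ring
      have h1θ0 : 0 ≤ 1 - θ := by rw [hθ1]; exact div_nonneg (by linarith [ha_le x]) hc0
      have key := convexOn_exp.2 (Set.mem_univ (t * (m - a))) (Set.mem_univ (t * (m - b)))
        hθ0 h1θ0 (by ring)
      have harg : θ • (t * (m - a)) + (1 - θ) • (t * (m - b)) = t * (m - Y x) := by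
        simp only [smul_eq_mul, hθdef, hb]
        field_simp
        ring
      rw [harg] at key
      calc Real.exp (t * (m - Y x)) ≤ θ • Real.exp (t * (m - a)) + (1 - θ) • Real.exp (t * (m - b)) := key
        _ = ((b - Y x) / c) * K1 + ((Y x - a) / c) * K2 := by
            rw [hθ1]; simp [smul_eq_mul, hθdef, hK1, hK2]
    -- integrability of both sides
    have hmeas1 : Measurable fun x => Real.exp (t * (m - Y x)) :=
      ((measurable_const.sub hY).const_mul t).exp
    have hbound1 : ∀ x, |Real.exp (t * (m - Y x))| ≤ Real.exp (|t| * (|m| + (|Y x₀| + c))) := by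
      intro x
      rw [abs_of_pos (Real.exp_pos _)]
      apply Real.exp_le_exp.2
      calc t * (m - Y x) ≤ |t * (m - Y x)| := le_abs_self _
        _ = |t| * |m - Y x| := abs_mul _ _
        _ ≤ |t| * (|m| + (|Y x₀| + c)) := by
            apply mul_le_mul_of_nonneg_left _ (abs_nonneg t)
            calc |m - Y x| ≤ |m| + |Y x| := abs_sub _ _
              _ ≤ |m| + (|Y x₀| + c) := by linarith [hYbd x]
    have hint1 : Integrable (fun x => Real.exp (t * (m - Y x))) μ :=
      integrable_of_abs_le μ hmeas1 hbound1
    have hrhseq : (fun x => ((b - Y x) / c) * K1 + ((Y x - a) / c) * K2) =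
        fun x => (b * K1 - a * K2) / c + Y x * ((K2 - K1) / c) := by
      funext x; field_simp; ring
    have hint2 : Integrable (fun x => ((b - Y x) / c) * K1 + ((Y x - a) / c) * K2) μ := by
      rw [hrhseq]
      exact (integrable_const _).add (hint.mul_const _)
    have hstep1 : ∫ x, Real.exp (t * (m - Y x)) ∂μ ≤
        ((b - m) / c) * K1 + ((m - a) / c) * K2 := by
      calc ∫ x, Real.exp (t * (m - Y x)) ∂μ
          ≤ ∫ x, (((b - Y x) / c) * K1 + ((Y x - a) / c) * K2) ∂μ :=
            integral_mono hint1 hint2 hptw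
        _ = (b * K1 - a * K2) / c + m * ((K2 - K1) / c) := by
            rw [hrhseq, integral_add (integrable_const _) (hint.mul_const _),
              integral_const, probReal_univ, one_smul,
              integral_mul_const]
        _ = ((b - m) / c) * K1 + ((m - a) / c) * K2 := by field_simp; ring
    -- apply key inequality
    have hKrw : ((b - m) / c) * K1 + ((m - a) / c) * K2 =
        Real.exp (-(p * h)) * (1 - p + p * Real.exp h) := by
      have hbm : (b - m) / c = 1 - p := by rw [hp, hb]; field_simp; ring
      have hta : t * (m - a) = -(p * h) := by
        rw [hh, hp]; field_simp
      have htb : t * (m - b) = -(p * h) + h := by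
        rw [hh, hp, hb]; field_simp; ring
      rw [hbm, ← hp, hK1, hK2, hta, htb, Real.exp_add]
      ring
    have hfinal : Real.exp (-(p * h)) * (1 - p + p * Real.exp h) ≤
        Real.exp (t ^ 2 * c ^ 2 / 8) := by
      calc Real.exp (-(p * h)) * (1 - p + p * Real.exp h)
          ≤ Real.exp (-(p * h)) * Real.exp (p * h + h ^ 2 / 8) :=
            mul_le_mul_of_nonneg_left (key_ineq hp0 hp1 h) (Real.exp_pos _).le
        _ = Real.exp (h ^ 2 / 8) := by rw [← Real.exp_add]; ring_nf
        _ = Real.exp (t ^ 2 * c ^ 2 / 8) := by rw [hh]; ring_nf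
    calc ∫ x, Real.exp (t * (m - Y x)) ∂μ ≤ ((b - m) / c) * K1 + ((m - a) / c) * K2 := hstep1
      _ = Real.exp (-(p * h)) * (1 - p + p * Real.exp h) := hKrw
      _ ≤ Real.exp (t ^ 2 * c ^ 2 / 8) := hfinal

lemma bdd_diff_total {𝒳 : Type*} : ∀ (n : ℕ) (f : (Fin n → 𝒳) → ℝ) (c : Fin n → ℝ),
    (∀ (i : Fin n) (x x' : Fin n → 𝒳), (∀ j, j ≠ i → x j = x' j) → |f x - f x'| ≤ c i) →
    ∀ x x', |f x - f x'| ≤ ∑ i, c i := by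
  intro n
  induction n with
  | zero =>
    intro f c _ x x'
    have hxx : x = x' := funext fun i => i.elim0
    simp [hxx]
  | succ n ih =>
    intro f c hbd x x'
    set xm : Fin (n + 1) → 𝒳 := Function.update x 0 (x' 0) with hxm
    have h1 : |f x - f xm| ≤ c 0 := by
      refine hbd 0 x xm fun j hj => ?_
      rw [hxm, Function.update_of_ne hj]
    set g : (Fin n → 𝒳) → ℝ := fun y => f (Fin.cons (x' 0) y) with hg
    have hbd' : ∀ (j : Fin n) (y y' : Fin n → 𝒳),
        (∀ k, k ≠ j → y k = y' k) → |g y - g y'| ≤ c j.succ := by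
      intro j y y' hagree
      refine hbd j.succ (Fin.cons (x' 0) y) (Fin.cons (x' 0) y') fun i hi => ?_
      rcases Fin.eq_zero_or_eq_succ i with rfl | ⟨k, rfl⟩
      · simp
      · simp only [Fin.cons_succ]
        exact hagree k (fun hkj => hi (by rw [hkj]))
    have h2 : xm = Fin.cons (x' 0) (fun j => x j.succ) := by
      funext i
      refine Fin.cases ?_ (fun j => ?_) i
      · simp [hxm]
      · rw [hxm, Function.update_of_ne (Fin.succ_ne_zero j), Fin.cons_succ]
    have h3 : x' = Fin.cons (x' 0) (fun j => x' j.succ) := by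
      funext i
      refine Fin.cases ?_ (fun j => ?_) i
      · simp
      · rw [Fin.cons_succ]
    have h4 : |f xm - f x'| ≤ ∑ j : Fin n, c j.succ := by
      have := ih g (fun j => c j.succ) (fun j y y' h => hbd' j y y' h)
        (fun j => x j.succ) (fun j => x' j.succ)
      rw [hg] at this
      simpa [← h2, ← h3] using this
    calc |f x - f x'| ≤ |f x - f xm| + |f xm - f x'| := abs_sub_le _ _ _
      _ ≤ c 0 + ∑ j : Fin n, c j.succ := add_le_add h1 h4
      _ = ∑ i, c i := (Fin.sum_univ_succ c).symm

lemma mcdiarmid_pi {𝒳 : Type*} [MeasurableSpace 𝒳] :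
    ∀ (n : ℕ) (ν : Fin n → Measure 𝒳), (∀ i, IsProbabilityMeasure (ν i)) →
    ∀ (f : (Fin n → 𝒳) → ℝ), Measurable f →
    ∀ (c : Fin n → ℝ),
      (∀ (i : Fin n) (x x' : Fin n → 𝒳), (∀ j, j ≠ i → x j = x' j) → |f x - f x'| ≤ c i) →
    ∀ l : ℝ,
      ∫ x, Real.exp (l * ((∫ x', f x' ∂Measure.pi ν) - f x)) ∂Measure.pi ν ≤
        Real.exp (l ^ 2 * (∑ i, c i ^ 2) / 8) := by
  intro n
  induction n with
  | zero =>
    intro ν hν f hf c hbd l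
    haveI := hν
    haveI : IsProbabilityMeasure (Measure.pi ν) := inferInstance
    set x₀ : Fin 0 → 𝒳 := fun i => i.elim0 with hx₀
    have hsub : ∀ x : Fin 0 → 𝒳, x = x₀ := fun x => funext fun i => i.elim0
    have hMint : (∫ x', f x' ∂Measure.pi ν) = f x₀ := by
      have : (fun x' => f x') = fun _ => f x₀ := funext fun x => by rw [hsub x]
      rw [this, integral_const, probReal_univ, one_smul]
    have : (fun x => Real.exp (l * ((∫ x', f x' ∂Measure.pi ν) - f x))) = fun _ => (1:ℝ) := by
      funext x
      rw [hMint, hsub x]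
      simp
    rw [this, integral_const, probReal_univ, one_smul]
    simp
  | succ n ih =>
    intro ν hν f hf c hbd l
    haveI := hν
    haveI hne : Nonempty 𝒳 := by
      by_contra hemp
      rw [not_nonempty_iff] at hemp
      have h1 : ν 0 Set.univ = 1 := measure_univ
      rw [Set.univ_eq_empty_iff.2 hemp] at h1
      simp at h1
    set κ : Fin n → Measure 𝒳 := fun j => ν j.succ with hκ
    haveI : ∀ j, IsProbabilityMeasure (κ j) := fun j => hν _
    haveI : IsProbabilityMeasure (Measure.pi ν) := inferInstance
    haveI : IsProbabilityMeasure (Measure.pi κ) := inferInstance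
    haveI : IsProbabilityMeasure ((ν 0).prod (Measure.pi κ)) := inferInstance
    set e := MeasurableEquiv.piFinSuccAbove (fun _ : Fin (n + 1) => 𝒳) 0 with he
    have hMP : MeasurePreserving e (Measure.pi ν) ((ν 0).prod (Measure.pi κ)) :=
      measurePreserving_piFinSuccAbove ν 0
    have hsymmMP : MeasurePreserving e.symm ((ν 0).prod (Measure.pi κ)) (Measure.pi ν) :=
      MeasurePreserving.symm e hMP
    have hesymm : ∀ z : 𝒳 × (Fin n → 𝒳), e.symm z = Fin.cons z.1 z.2 := by
      intro z
      funext i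
      refine Fin.cases ?_ (fun j => ?_) i
      · simp [he, MeasurableEquiv.piFinSuccAbove]
      · simp [he, MeasurableEquiv.piFinSuccAbove, Fin.cons_succ]
    have htrans : ∀ F : (Fin (n + 1) → 𝒳) → ℝ,
        ∫ x, F x ∂Measure.pi ν = ∫ z, F (Fin.cons z.1 z.2) ∂(ν 0).prod (Measure.pi κ) := by
      intro F
      rw [← hsymmMP.integral_comp' F]
      simp only [hesymm]
    -- boundedness of f
    set xbar : Fin (n + 1) → 𝒳 := fun _ => Classical.arbitrary 𝒳 with hxbar
    set B : ℝ := |f xbar| + ∑ i, c i with hB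
    have hfB : ∀ x, |f x| ≤ B := by
      intro x
      have := bdd_diff_total (n + 1) f c hbd x xbar
      calc |f x| ≤ |f x - f xbar| + |f xbar| := by
            have := abs_sub_abs_le_abs_sub (f x) (f xbar); linarith [abs_add_le (f x - f xbar) (f xbar),
              abs_sub_le (f x) (f xbar) 0]
        _ ≤ B := by rw [hB]; linarith
    -- measurability of cons
    have hconsm : Measurable fun z : 𝒳 × (Fin n → 𝒳) => (Fin.cons z.1 z.2 : Fin (n + 1) → 𝒳) := by
      apply measurable_pi_iff.2
      intro i
      refine Fin.cases ?_ (fun j => ?_) i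
      · simpa using (measurable_fst : Measurable fun z : 𝒳 × (Fin n → 𝒳) => z.1)
      · simp only [Fin.cons_succ]; exact (measurable_pi_apply j).comp
          (measurable_snd : Measurable fun z : 𝒳 × (Fin n → 𝒳) => z.2)
    have hconsa : ∀ a : 𝒳, Measurable fun y : Fin n → 𝒳 => (Fin.cons a y : Fin (n + 1) → 𝒳) :=
      fun a => hconsm.comp (measurable_const.prodMk measurable_id)
    have hfc : Measurable fun z : 𝒳 × (Fin n → 𝒳) => f (Fin.cons z.1 z.2) := hf.comp hconsm
    set M := ∫ x', f x' ∂Measure.pi ν with hM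
    set G : 𝒳 → ℝ := fun a => ∫ y, f (Fin.cons a y) ∂Measure.pi κ with hG
    have hGmeas : Measurable G := hfc.stronglyMeasurable.integral_prod_right'.measurable
    have hGbd : ∀ a, |G a| ≤ B := by
      intro a
      rw [hG]
      calc |∫ y, f (Fin.cons a y) ∂Measure.pi κ| = ‖∫ y, f (Fin.cons a y) ∂Measure.pi κ‖ :=
            (Real.norm_eq_abs _).symm
        _ ≤ B * ((Measure.pi κ) Set.univ).toReal := norm_integral_le_of_norm_le_const
            (Filter.Eventually.of_forall fun y => by
              rw [Real.norm_eq_abs]; exact hfB _)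
        _ = B := by simp [measure_univ]
    have hGdiff : ∀ a a', |G a - G a'| ≤ c 0 := by
      intro a a'
      have hint1 : Integrable (fun y => f (Fin.cons a y)) (Measure.pi κ) :=
        integrable_of_abs_le _ (hf.comp (hconsa a)) (fun y => hfB _)
      have hint2 : Integrable (fun y => f (Fin.cons a' y)) (Measure.pi κ) :=
        integrable_of_abs_le _ (hf.comp (hconsa a')) (fun y => hfB _)
      rw [hG]
      simp only
      rw [← integral_sub hint1 hint2]
      calc |∫ y, (f (Fin.cons a y) - f (Fin.cons a' y)) ∂Measure.pi κ|
          = ‖∫ y, (f (Fin.cons a y) - f (Fin.cons a' y)) ∂Measure.pi κ‖ :=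
            (Real.norm_eq_abs _).symm
        _ ≤ c 0 * ((Measure.pi κ) Set.univ).toReal := by
            refine norm_integral_le_of_norm_le_const (Filter.Eventually.of_forall fun y => ?_)
            rw [Real.norm_eq_abs]
            refine hbd 0 (Fin.cons a y) (Fin.cons a' y) fun j hj => ?_
            rcases Fin.eq_zero_or_eq_succ j with rfl | ⟨k, rfl⟩
            · exact absurd rfl hj
            · simp [Fin.cons_succ]
        _ = c 0 := by simp [measure_univ]
    have hMeq : M = ∫ a, G a ∂ν 0 := by
      rw [hM, htrans f, integral_prod _ (integrable_of_abs_le _ hfc (fun z => hfB _))]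
    -- main computation
    set K1 := Real.exp (l ^ 2 * (∑ j : Fin n, c j.succ ^ 2) / 8) with hK1
    have hK1pos : 0 < K1 := Real.exp_pos _
    have hexpm : Measurable fun z : 𝒳 × (Fin n → 𝒳) =>
        Real.exp (l * (M - f (Fin.cons z.1 z.2))) :=
      ((measurable_const.sub hfc).const_mul l).exp
    have hexpbd : ∀ z : 𝒳 × (Fin n → 𝒳),
        |Real.exp (l * (M - f (Fin.cons z.1 z.2)))| ≤ Real.exp (|l| * (|M| + B)) := by
      intro z
      rw [abs_of_pos (Real.exp_pos _)]
      apply Real.exp_le_exp.2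
      calc l * (M - f (Fin.cons z.1 z.2)) ≤ |l * (M - f (Fin.cons z.1 z.2))| := le_abs_self _
        _ = |l| * |M - f (Fin.cons z.1 z.2)| := abs_mul _ _
        _ ≤ |l| * (|M| + B) := mul_le_mul_of_nonneg_left
            (le_trans (abs_sub _ _) (add_le_add_right (hfB _) _)) (abs_nonneg l)
    have hinner_le : ∀ a : 𝒳,
        (∫ y, Real.exp (l * (M - f (Fin.cons a y))) ∂Measure.pi κ) ≤
          Real.exp (l * (M - G a)) * K1 := by
      intro a
      have hsplit : (fun y => Real.exp (l * (M - f (Fin.cons a y)))) =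
          fun y => Real.exp (l * (M - G a)) * Real.exp (l * (G a - f (Fin.cons a y))) := by
        funext y
        rw [← Real.exp_add]
        congr 1
        ring
      rw [hsplit, integral_const_mul]
      refine mul_le_mul_of_nonneg_left ?_ (Real.exp_pos _).le
      have hbd' : ∀ (j : Fin n) (y y' : Fin n → 𝒳), (∀ k, k ≠ j → y k = y' k) →
          |f (Fin.cons a y) - f (Fin.cons a y')| ≤ c j.succ := by
        intro j y y' hagree
        refine hbd j.succ (Fin.cons a y) (Fin.cons a y') fun i hi => ?_
        rcases Fin.eq_zero_or_eq_succ i with rfl | ⟨k, rfl⟩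
        · simp
        · simp only [Fin.cons_succ]
          exact hagree k (fun hkj => hi (by rw [hkj]))
      have := ih κ (fun j => hν _) (fun y => f (Fin.cons a y)) (hf.comp (hconsa a))
        (fun j => c j.succ) hbd' l
      exact this
    have houter_meas : Measurable fun a =>
        ∫ y, Real.exp (l * (M - f (Fin.cons a y))) ∂Measure.pi κ :=
      hexpm.stronglyMeasurable.integral_prod_right'.measurable
    have houter_bd : ∀ a, |∫ y, Real.exp (l * (M - f (Fin.cons a y))) ∂Measure.pi κ| ≤
        Real.exp (|l| * (|M| + B)) := by
      intro a
      calc |∫ y, Real.exp (l * (M - f (Fin.cons a y))) ∂Measure.pi κ|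
          = ‖∫ y, Real.exp (l * (M - f (Fin.cons a y))) ∂Measure.pi κ‖ :=
            (Real.norm_eq_abs _).symm
        _ ≤ Real.exp (|l| * (|M| + B)) * ((Measure.pi κ) Set.univ).toReal :=
            norm_integral_le_of_norm_le_const (Filter.Eventually.of_forall fun y => by
              rw [Real.norm_eq_abs]; exact hexpbd (a, y))
        _ = _ := by simp [measure_univ]
    have hGexp_meas : Measurable fun a => Real.exp (l * (M - G a)) * K1 :=
      (((measurable_const.sub hGmeas).const_mul l).exp).mul_const K1
    have hGexp_bd : ∀ a, |Real.exp (l * (M - G a)) * K1| ≤ Real.exp (|l| * (|M| + B)) * K1 := by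
      intro a
      rw [abs_of_pos (mul_pos (Real.exp_pos _) hK1pos)]
      refine mul_le_mul_of_nonneg_right ?_ hK1pos.le
      apply Real.exp_le_exp.2
      calc l * (M - G a) ≤ |l * (M - G a)| := le_abs_self _
        _ = |l| * |M - G a| := abs_mul _ _
        _ ≤ |l| * (|M| + B) := mul_le_mul_of_nonneg_left
            (le_trans (abs_sub _ _) (add_le_add_right (hGbd _) _)) (abs_nonneg l)
    calc ∫ x, Real.exp (l * (M - f x)) ∂Measure.pi ν
        = ∫ z, Real.exp (l * (M - f (Fin.cons z.1 z.2))) ∂(ν 0).prod (Measure.pi κ) :=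
          htrans _
      _ = ∫ a, ∫ y, Real.exp (l * (M - f (Fin.cons a y))) ∂Measure.pi κ ∂ν 0 :=
          integral_prod _ (integrable_of_abs_le _ hexpm hexpbd)
      _ ≤ ∫ a, Real.exp (l * (M - G a)) * K1 ∂ν 0 :=
          integral_mono (integrable_of_abs_le _ houter_meas houter_bd)
            (integrable_of_abs_le _ hGexp_meas hGexp_bd) hinner_le
      _ = (∫ a, Real.exp (l * (M - G a)) ∂ν 0) * K1 := integral_mul_const _ _
      _ ≤ Real.exp (l ^ 2 * (c 0) ^ 2 / 8) * K1 := by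
          refine mul_le_mul_of_nonneg_right ?_ hK1pos.le
          have := hoeffding_le (ν 0) hGmeas hGdiff l
          rwa [← hMeq] at this
      _ = Real.exp (l ^ 2 * (∑ i, c i ^ 2) / 8) := by
          rw [hK1, ← Real.exp_add, Fin.sum_univ_succ (fun i => c i ^ 2)]
          congr 1
          ring

/-- Multivariate Hoeffding-type bound: if `f : 𝒳^n → ℝ` has the bounded difference property with
constants `c i`, and `X 1, …, X n` are independent `𝒳`-valued random variables, then with
`Z = f (X 1, …, X n)`, for every `λ ∈ ℝ`,
`E[exp(λ (E[Z] - Z))] ≤ exp(λ² ∑ c i ² / 8)`. -/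
theorem multivariate_hoeffding {Ω 𝒳 : Type*} [MeasurableSpace Ω] [MeasurableSpace 𝒳]
    (μ : Measure Ω) [IsProbabilityMeasure μ] (n : ℕ)
    (f : (Fin n → 𝒳) → ℝ) (hf : Measurable f) (c : Fin n → ℝ)
    (hbd : ∀ (i : Fin n) (x x' : Fin n → 𝒳),
      (∀ j, j ≠ i → x j = x' j) → |f x - f x'| ≤ c i)
    (X : Fin n → Ω → 𝒳) (hXm : ∀ i, Measurable (X i))
    (hindep : iIndepFun X μ)
    (Z : Ω → ℝ) (hZ : Z = fun ω => f (fun i => X i ω)) (l : ℝ) :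
    ∫ ω, Real.exp (l * ((∫ ω', Z ω' ∂μ) - Z ω)) ∂μ ≤
      Real.exp (l ^ 2 * (∑ i, c i ^ 2) / 8) := by
  subst hZ
  set T : Ω → Fin n → 𝒳 := fun ω i => X i ω with hT
  have hTm : Measurable T := measurable_pi_iff.2 hXm
  set ν : Fin n → Measure 𝒳 := fun i => μ.map (X i) with hν
  haveI : ∀ i, IsProbabilityMeasure (ν i) := fun i => Measure.isProbabilityMeasure_map (hXm i).aemeasurable
  have hmap : μ.map T = Measure.pi ν := by
    refine (Measure.pi_eq (μ := ν) fun s hs => ?_).symm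
    rw [Measure.map_apply hTm (MeasurableSet.univ_pi hs)]
    have hpre : T ⁻¹' Set.pi Set.univ s = ⋂ i, X i ⁻¹' s i := by
      ext ω
      simp [hT, Set.mem_pi]
    rw [hpre]
    have hinter : (⋂ i, X i ⁻¹' s i) = ⋂ i ∈ (Finset.univ : Finset (Fin n)), X i ⁻¹' s i := by
      simp
    rw [hinter, hindep.measure_inter_preimage_eq_mul Finset.univ (fun i _ => hs i)]
    refine Finset.prod_congr rfl fun i _ => ?_
    rw [hν]
    rw [Measure.map_apply (hXm i) (hs i)]
  have hZint : (∫ ω', f (T ω') ∂μ) = ∫ x', f x' ∂Measure.pi ν := by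
    rw [← hmap, integral_map hTm.aemeasurable hf.aestronglyMeasurable]
  have hwhole : ∀ M : ℝ, (∫ ω, Real.exp (l * (M - f (T ω))) ∂μ) =
      ∫ x, Real.exp (l * (M - f x)) ∂Measure.pi ν := by
    intro M
    rw [← hmap, integral_map hTm.aemeasurable (f := fun x => Real.exp (l * (M - f x)))
      (((measurable_const.sub hf).const_mul l).exp).aestronglyMeasurable]
  calc ∫ ω, Real.exp (l * ((∫ ω', f (T ω') ∂μ) - f (T ω))) ∂μ
      = ∫ x, Real.exp (l * ((∫ x', f x' ∂Measure.pi ν) - f x)) ∂Measure.pi ν := by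
        rw [hZint, hwhole]
    _ ≤ Real.exp (l ^ 2 * (∑ i, c i ^ 2) / 8) :=
        mcdiarmid_pi n ν inferInstance f hf c hbd l
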